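/- If U ∈ ℝ^{2n×2k} is both symplectic (U^T J_n U = J_k) and has orthonormal columns (U^T U = I), then U† = J_k^{-1}U^T J_n equals U^T, and hence for any Hamiltonian matrix H the projected matrix F = U^T H U is Hamiltonian. -/
import Mathlib


open Matrix

noncomputable def Jmat (n : ℕ) : Matrix (Fin n ⊕ Fin n) (Fin n ⊕ Fin n) ℝ :=
  Matrix.fromBlocks 0 1 (-1) 0

lemma Jmat_sq (m : ℕ) : Jmat m * Jmat m = -1 := by
  rw [Jmat, Matrix.fromBlocks_multiply]
  ext (i | i) (j | j) <;>
    simp [Matrix.one_apply, Sum.inl.injEq, Sum.inr.injEq]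

lemma Jmat_transpose (m : ℕ) : (Jmat m)ᵀ = -(Jmat m) := by
  rw [Jmat, Matrix.fromBlocks_transpose]
  ext (i | i) (j | j) <;> simp

lemma Jmat_inv (m : ℕ) : (Jmat m)⁻¹ = -(Jmat m) := by
  apply Matrix.inv_eq_right_inv
  rw [mul_neg, Jmat_sq, neg_neg]

theorem stmt19 (n k : ℕ) (U : Matrix (Fin n ⊕ Fin n) (Fin k ⊕ Fin k) ℝ)
    (hsymp : Uᵀ * Jmat n * U = Jmat k) (horth : Uᵀ * U = 1) :
    (Jmat k)⁻¹ * Uᵀ * Jmat n = Uᵀ ∧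
    ∀ H : Matrix (Fin n ⊕ Fin n) (Fin n ⊕ Fin n) ℝ, Hᵀ = Jmat n * H * Jmat n →
      (Uᵀ * H * U)ᵀ = Jmat k * (Uᵀ * H * U) * Jmat k := by
  set M := Jmat n * U - U * Jmat k with hM
  have hT1 : (Jmat n * U)ᵀ * (Jmat n * U) = 1 := by
    rw [Matrix.transpose_mul, Jmat_transpose, Matrix.mul_assoc,
      ← Matrix.mul_assoc (-Jmat n), Matrix.neg_mul, Jmat_sq, neg_neg, Matrix.one_mul, horth]
  have hT2 : (Jmat n * U)ᵀ * (U * Jmat k) = 1 := by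
    rw [Matrix.transpose_mul, Jmat_transpose, Matrix.mul_neg, Matrix.neg_mul,
      ← Matrix.mul_assoc, hsymp, Jmat_sq, neg_neg]
  have hT3 : (U * Jmat k)ᵀ * (Jmat n * U) = 1 := by
    rw [Matrix.transpose_mul, Jmat_transpose, Matrix.neg_mul, Matrix.neg_mul,
      Matrix.mul_assoc (Jmat k), ← Matrix.mul_assoc Uᵀ, hsymp, Jmat_sq, neg_neg]
  have hT4 : (U * Jmat k)ᵀ * (U * Jmat k) = 1 := by
    rw [Matrix.transpose_mul, Jmat_transpose, Matrix.neg_mul, Matrix.neg_mul,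
      Matrix.mul_assoc (Jmat k), ← Matrix.mul_assoc Uᵀ, horth, Matrix.one_mul,
      Jmat_sq, neg_neg]
  have hMM : Mᵀ * M = 0 := by
    rw [hM, Matrix.transpose_sub, Matrix.sub_mul, Matrix.mul_sub, Matrix.mul_sub,
      hT1, hT2, hT3, hT4]
    simp
  have hMH : Mᴴ = Mᵀ := by
    ext i j; simp [Matrix.conjTranspose_apply, Matrix.transpose_apply]
  have hM0 : M = 0 := by
    rw [← Matrix.conjTranspose_mul_self_eq_zero, hMH, hMM]
  have hcomm : Jmat n * U = U * Jmat k := by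
    have := sub_eq_zero.mp hM0
    exact this
  have hcommT : Uᵀ * Jmat n = Jmat k * Uᵀ := by
    have := congrArg Matrix.transpose hcomm
    simp only [Matrix.transpose_mul, Jmat_transpose, Matrix.mul_neg, Matrix.neg_mul] at this
    exact neg_injective this
  constructor
  · rw [Jmat_inv, Matrix.neg_mul, Matrix.neg_mul, Matrix.mul_assoc, hcommT,
      ← Matrix.mul_assoc, Jmat_sq, Matrix.neg_mul, neg_neg, Matrix.one_mul]
  · intro H hH
    have hcomm' : Jmat n * U = U * Jmat k := hcomm
    calc (Uᵀ * H * U)ᵀ = Uᵀ * Hᵀ * U := by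
          rw [Matrix.transpose_mul, Matrix.transpose_mul, Matrix.transpose_transpose,
            Matrix.mul_assoc]
      _ = (Uᵀ * Jmat n) * H * (Jmat n * U) := by
          rw [hH]; simp only [Matrix.mul_assoc]
      _ = Jmat k * (Uᵀ * H * U) * Jmat k := by
          rw [hcommT, hcomm']; simp only [Matrix.mul_assoc]
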